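/- Cover the plane with overlapping axis-aligned square cells of side β whose centers form a grid of spacing β − 2δ, where 0 < δ < β/4. Then: (1) every point of the plane is contained in at least one cell and at most four cells; (2) any segment whose two endpoints lie in no common cell has length greater than δ. -/
import Mathlib


/-- Membership of a point `p` in the grid cell with index `(i, j)`:
cells are axis-aligned squares of side `β` whose lower-left corners form the
grid `((β - 2δ)·i, (β - 2δ)·j)`, so that adjacent cells overlap. -/
def InGridCell (β δ : ℝ) (i j : ℤ) (p : EuclideanSpace ℝ (Fin 2)) : Prop :=
  (i : ℝ) * (β - 2 * δ) ≤ p 0 ∧ p 0 ≤ (i : ℝ) * (β - 2 * δ) + β ∧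
  (j : ℝ) * (β - 2 * δ) ≤ p 1 ∧ p 1 ≤ (j : ℝ) * (β - 2 * δ) + β

lemma coord_dist_le (p q : EuclideanSpace ℝ (Fin 2)) (k : Fin 2) :
    |p k - q k| ≤ dist p q := by
  have h := EuclideanSpace.dist_eq p q
  rw [h]
  have h1 : |p k - q k| = Real.sqrt ((p k - q k) ^ 2) := (Real.sqrt_sq_eq_abs _).symm
  rw [h1]
  apply Real.sqrt_le_sqrt
  have : (p k - q k) ^ 2 = dist (p k) (q k) ^ 2 := by
    rw [Real.dist_eq, sq_abs]
  rw [this]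
  exact Finset.single_le_sum (f := fun i => dist (p i) (q i) ^ 2) (fun i _ => sq_nonneg _) (Finset.mem_univ k)

lemma floor_cell (s x : ℝ) (hs : 0 < s) :
    (⌊x / s⌋ : ℝ) * s ≤ x ∧ x < (⌊x / s⌋ : ℝ) * s + s := by
  constructor
  · have := Int.floor_le (x / s)
    calc (⌊x / s⌋ : ℝ) * s ≤ (x / s) * s := by nlinarith
    _ = x := by field_simp
  · have := Int.lt_floor_add_one (x / s)
    have h2 : x / s * s < ((⌊x / s⌋ : ℝ) + 1) * s := by nlinarith
    have h3 : x / s * s = x := by field_simp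
    nlinarith

/-- for the overlapping grid of square cells of side `β` with
spacing `β − 2δ`, `0 < δ < β/4`: (1) every point lies in at least one and at
most four cells; (2) any two points at distance at most `δ` lie in a common
cell (equivalently, a segment whose endpoints share no cell is longer
than `δ`). -/
theorem stmt_6 (β δ : ℝ) (hδ : 0 < δ) (hδβ : δ < β / 4) :
    (∀ p : EuclideanSpace ℝ (Fin 2), ∃ i j : ℤ, InGridCell β δ i j p) ∧
    (∀ p : EuclideanSpace ℝ (Fin 2), ∃ S : Finset (ℤ × ℤ), S.card ≤ 4 ∧
      ∀ i j : ℤ, InGridCell β δ i j p → (i, j) ∈ S) ∧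
    (∀ p q : EuclideanSpace ℝ (Fin 2), dist p q ≤ δ →
      ∃ i j : ℤ, InGridCell β δ i j p ∧ InGridCell β δ i j q) := by
  set s : ℝ := β - 2 * δ with hs_def
  have hs : 0 < s := by simp only [hs_def]; linarith
  have hβ2s : β < 2 * s := by simp only [hs_def]; linarith
  have hsβ : s < β := by simp only [hs_def]; linarith
  refine ⟨?_, ?_, ?_⟩
  · intro p
    refine ⟨⌊p 0 / s⌋, ⌊p 1 / s⌋, ?_, ?_, ?_, ?_⟩
    · exact (floor_cell s (p 0) hs).1
    · have := (floor_cell s (p 0) hs).2; linarith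
    · exact (floor_cell s (p 1) hs).1
    · have := (floor_cell s (p 1) hs).2; linarith
  · intro p
    refine ⟨({⌊p 0 / s⌋ - 1, ⌊p 0 / s⌋} : Finset ℤ) ×ˢ ({⌊p 1 / s⌋ - 1, ⌊p 1 / s⌋} : Finset ℤ), ?_, ?_⟩
    · calc (({⌊p 0 / s⌋ - 1, ⌊p 0 / s⌋} : Finset ℤ) ×ˢ ({⌊p 1 / s⌋ - 1, ⌊p 1 / s⌋} : Finset ℤ)).card
          = ({⌊p 0 / s⌋ - 1, ⌊p 0 / s⌋} : Finset ℤ).card *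
            ({⌊p 1 / s⌋ - 1, ⌊p 1 / s⌋} : Finset ℤ).card := Finset.card_product _ _
      _ ≤ 2 * 2 := by
          apply Nat.mul_le_mul <;>
          exact (Finset.card_insert_le _ _).trans (by simp)
      _ = 4 := by norm_num
    · intro i j ⟨h1, h2, h3, h4⟩
      have key : ∀ (k : ℤ) (x : ℝ), (k : ℝ) * s ≤ x → x ≤ (k : ℝ) * s + β →
          k = ⌊x / s⌋ - 1 ∨ k = ⌊x / s⌋ := by
        intro k x hl hr
        have hk1 : k ≤ ⌊x / s⌋ := by
          apply Int.le_floor.2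
          rw [le_div_iff₀ hs]; linarith
        have hk2 : ⌊x / s⌋ < k + 2 := by
          apply Int.floor_lt.2
          push_cast
          rw [div_lt_iff₀ hs]; nlinarith
        omega
      rw [Finset.mem_product]
      constructor
      · rcases key i (p 0) h1 h2 with h | h <;> simp [h]
      · rcases key j (p 1) h3 h4 with h | h <;> simp [h]
  · intro p q hpq
    have key : ∀ k : Fin 2, ∃ i : ℤ, (i : ℝ) * s ≤ p k ∧ p k ≤ (i : ℝ) * s + β ∧
        (i : ℝ) * s ≤ q k ∧ q k ≤ (i : ℝ) * s + β := by
      intro k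
      have hd : |p k - q k| ≤ δ := (coord_dist_le p q k).trans hpq
      rw [abs_le] at hd
      refine ⟨⌊min (p k) (q k) / s⌋, ?_, ?_, ?_, ?_⟩
      · exact (floor_cell s _ hs).1.trans (min_le_left _ _)
      · have := (floor_cell s (min (p k) (q k)) hs).2
        have : min (p k) (q k) ≤ q k := min_le_right _ _
        rcases min_cases (p k) (q k) with ⟨h, _⟩ | ⟨h, _⟩ <;>
          [skip; skip] <;>
        · have h2 := (floor_cell s (min (p k) (q k)) hs).2
          rw [h] at h2 ⊢
          simp only [hs_def] at h2 ⊢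
          linarith
      · exact (floor_cell s _ hs).1.trans (min_le_right _ _)
      · rcases min_cases (p k) (q k) with ⟨h, _⟩ | ⟨h, _⟩ <;>
        · have h2 := (floor_cell s (min (p k) (q k)) hs).2
          rw [h] at h2 ⊢
          simp only [hs_def] at h2 ⊢
          linarith
    obtain ⟨i, hi⟩ := key 0
    obtain ⟨j, hj⟩ := key 1
    exact ⟨i, j, ⟨hi.1, hi.2.1, hj.1, hj.2.1⟩, ⟨hi.2.2.1, hi.2.2.2, hj.2.2.1, hj.2.2.2⟩⟩
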